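/- If φ and ψ are continuously differentiable and c = (r,z) : I → ℝ² is a characteristic curve on an interval I, then the circulation is constant along the curve: Γ(r(t), z(t)) = Γ(r(t₀), z(t₀)) for all t, t₀ ∈ I. In other words, Γ = r·φ(r)·ψ(z) is a first integral of the characteristic system, so characteristic curves lie on level curves of Γ. (Lemma: the characteristic curves are the level curves of the circulation Γ = r·v.) -/

import Mathlib

open Set

/-- Circulation `Γ(r,z) = r·φ(r)·ψ(z)`. -/
noncomputable def circ (φ ψ : ℝ → ℝ) (p : ℝ × ℝ) : ℝ := p.1 * φ p.1 * ψ p.2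

/-- Vertical vorticity `ζ(r,z) = g'(r)·ψ(z)/r` where `g(r) = r·φ(r)`. -/
noncomputable def zeta (φ ψ : ℝ → ℝ) (r z : ℝ) : ℝ :=
  deriv (fun s => s * φ s) r * ψ z / r

/-- Radial vorticity `η(r,z) = −φ(r)·ψ'(z)`. -/
noncomputable def eta (φ ψ : ℝ → ℝ) (r z : ℝ) : ℝ := -(φ r * deriv ψ z)

/-- A characteristic curve on an interval `I`: a differentiable curve
`c(t) = (r(t), z(t))` with `r(t) > 0` satisfying `r' = η(r,z)`, `z' = ζ(r,z)` on `I`. -/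
def IsCharCurve (φ ψ : ℝ → ℝ) (I : Set ℝ) (c : ℝ → ℝ × ℝ) : Prop :=
  (∀ t ∈ I, 0 < (c t).1) ∧
  ∀ t ∈ I,
    HasDerivWithinAt c
      (eta φ ψ (c t).1 (c t).2, zeta φ ψ (c t).1 (c t).2) I t

/-- The circulation `Γ = r·φ(r)·ψ(z)` is a first integral of the characteristic
system: it is constant along every characteristic curve. -/
theorem circulation_constant_along_characteristics
    (φ ψ : ℝ → ℝ) (hφ : ContDiff ℝ 1 φ) (hψ : ContDiff ℝ 1 ψ)
    (I : Set ℝ) (hI : I.OrdConnected)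
    (c : ℝ → ℝ × ℝ) (hc : IsCharCurve φ ψ I c) :
    ∀ t ∈ I, ∀ t₀ ∈ I, circ φ ψ (c t) = circ φ ψ (c t₀) := by
  obtain ⟨hpos, hderiv⟩ := hc
  set g : ℝ → ℝ := fun s => s * φ s with hg
  have hgdiff : Differentiable ℝ g := differentiable_id.mul (hφ.differentiable one_ne_zero)
  have hψdiff : Differentiable ℝ ψ := hψ.differentiable one_ne_zero
  have key : ∀ t ∈ I, HasDerivWithinAt (fun t => circ φ ψ (c t)) 0 I t := by
    intro t ht
    have hc' := hderiv t ht
    have hr : HasDerivWithinAt (fun t => (c t).1)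
        (eta φ ψ (c t).1 (c t).2) I t := hc'.fst
    have hz : HasDerivWithinAt (fun t => (c t).2)
        (zeta φ ψ (c t).1 (c t).2) I t := hc'.snd
    have hgr : HasDerivWithinAt (fun t => g ((c t).1))
        (deriv g (c t).1 * eta φ ψ (c t).1 (c t).2) I t :=
      by have := (hgdiff ((c t).1)).hasDerivAt.comp_hasDerivWithinAt t hr; exact this
    have hψz : HasDerivWithinAt (fun t => ψ ((c t).2))
        (deriv ψ (c t).2 * zeta φ ψ (c t).1 (c t).2) I t :=
      by have := (hψdiff ((c t).2)).hasDerivAt.comp_hasDerivWithinAt t hz; exact this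
    have hprod := hgr.mul hψz
    have heq : deriv g (c t).1 * eta φ ψ (c t).1 (c t).2 * ψ ((c t).2) +
        g ((c t).1) * (deriv ψ (c t).2 * zeta φ ψ (c t).1 (c t).2) = 0 := by
      have hrne : (c t).1 ≠ 0 := ne_of_gt (hpos t ht)
      simp only [eta, zeta, hg]
      field_simp
      ring
    have : HasDerivWithinAt (fun t => g ((c t).1) * ψ ((c t).2)) 0 I t := by
      rw [← heq]; exact hprod
    simpa [circ, hg, mul_assoc] using this
  intro t ht t₀ ht₀
  have hconv : Convex ℝ I := convex_iff_ordConnected.mpr hI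
  have := hconv.norm_image_sub_le_of_norm_hasDerivWithin_le
    (f' := fun _ => (0 : ℝ)) (fun x hx => key x hx)
    (C := 0) (fun x _ => by simp) ht₀ ht
  have h0 : ‖circ φ ψ (c t) - circ φ ψ (c t₀)‖ ≤ 0 := by simpa using this
  have := norm_le_zero_iff.mp h0
  linarith [sub_eq_zero.mp this]
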